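/- For a Hermitian operator A on a finite-dimensional Hilbert space with spectrum in an open set U and a function f analytic on U, the directional derivative of A ↦ Tr f(A) in the direction of a Hermitian operator B is Tr(f'(A) B); that is, d/dε|_{ε=0} Tr f(A + εB) = Tr(f'(A)B). -/

import Mathlib

open Matrix Polynomial

attribute [local instance] Matrix.linftyOpNormedRing Matrix.linftyOpNormedAlgebra

noncomputable def matFun {n : Type*} [Fintype n] [DecidableEq n]
    (f : ℝ → ℝ) (A : Matrix n n ℂ) : Matrix n n ℂ :=
  if h : A.IsHermitian then
    (Matrix.IsHermitian.eigenvectorUnitary h : Matrix n n ℂ) *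
      Matrix.diagonal (fun i => ((f (h.eigenvalues i) : ℝ) : ℂ)) *
      star (Matrix.IsHermitian.eigenvectorUnitary h : Matrix n n ℂ)
  else 0

section Helpers

variable {n : Type*} [Fintype n] [DecidableEq n]

theorem hermite_interp (s : Finset ℝ) (v dv : ℝ → ℝ) :
    ∃ p : ℝ[X], ∀ x ∈ s, p.eval x = v x ∧ (derivative p).eval x = dv x := by
  classical
  induction s using Finset.induction_on with
  | empty => exact ⟨0, by simp⟩
  | @insert a s ha ih =>
    obtain ⟨p, hp⟩ := ih
    set g : ℝ[X] := ∏ y ∈ s, (X - C y) with hg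
    set W : ℝ[X] := g ^ 2 with hW
    have hgy : ∀ y ∈ s, g.eval y = 0 := by
      intro y hy
      rw [hg, eval_prod]
      exact Finset.prod_eq_zero hy (by simp)
    have hWy : ∀ y ∈ s, W.eval y = 0 := by
      intro y hy; rw [hW]; simp [hgy y hy]
    have hW' : derivative W = 2 * g * derivative g := by
      rw [hW, derivative_sq, map_ofNat]
    have hW'y : ∀ y ∈ s, (derivative W).eval y = 0 := by
      intro y hy; rw [hW']; simp [hgy y hy]
    have hWa : W.eval a ≠ 0 := by
      rw [hW, eval_pow, hg, eval_prod]
      apply pow_ne_zero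
      apply Finset.prod_ne_zero_iff.2
      intro y hy
      simp only [eval_sub, eval_X, eval_C, sub_ne_zero]
      exact fun h => ha (h ▸ hy)
    set c : ℝ := (v a - p.eval a) / W.eval a with hc
    set d : ℝ := (dv a - (derivative p).eval a - c * (derivative W).eval a) / W.eval a with hd
    set r : ℝ[X] := C c + C d * (X - C a) with hr
    refine ⟨p + r * W, ?_⟩
    have hdq : derivative (p + r * W) = derivative p + C d * W + r * derivative W := by
      rw [derivative_add, derivative_mul, hr]
      simp only [derivative_add, derivative_C, derivative_mul, derivative_sub, derivative_X,
        zero_add, mul_one, sub_zero, mul_zero, add_zero]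
      ring
    intro x hx
    rcases Finset.mem_insert.1 hx with rfl | hx
    · constructor
      · simp only [eval_add, eval_mul, hr, eval_C, eval_X, eval_sub, sub_self, mul_zero, add_zero]
        rw [hc]; field_simp; ring
      · rw [hdq]
        simp only [eval_add, eval_mul, hr, eval_C, eval_X, eval_sub, sub_self, mul_zero, add_zero]
        rw [hd]; field_simp; ring
    · have h1 := (hp x hx).1
      have h2 := (hp x hx).2
      constructor
      · simp [hWy x hx, h1]
      · rw [hdq]; simp [hWy x hx, hW'y x hx, h2]

theorem matFun_of_isHermitian (f : ℝ → ℝ) {A : Matrix n n ℂ} (h : A.IsHermitian) :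
    matFun f A = (Matrix.IsHermitian.eigenvectorUnitary h : Matrix n n ℂ) *
      Matrix.diagonal (fun i => ((f (h.eigenvalues i) : ℝ) : ℂ)) *
      star (Matrix.IsHermitian.eigenvectorUnitary h : Matrix n n ℂ) :=
  dif_pos h

theorem matFun_congr {f g : ℝ → ℝ} {A : Matrix n n ℂ} (h : A.IsHermitian)
    (hfg : ∀ i, f (h.eigenvalues i) = g (h.eigenvalues i)) :
    matFun f A = matFun g A := by
  rw [matFun_of_isHermitian f h, matFun_of_isHermitian g h]
  have : (fun i => ((f (h.eigenvalues i) : ℝ) : ℂ)) = fun i => ((g (h.eigenvalues i) : ℝ) : ℂ) :=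
    funext fun i => by rw [hfg i]
  rw [this]

theorem matFun_add (f g : ℝ → ℝ) {A : Matrix n n ℂ} (h : A.IsHermitian) :
    matFun (fun x => f x + g x) A = matFun f A + matFun g A := by
  rw [matFun_of_isHermitian _ h, matFun_of_isHermitian f h, matFun_of_isHermitian g h]
  push_cast
  rw [← diagonal_add, mul_add, add_mul]

theorem trace_matFun (f : ℝ → ℝ) {A : Matrix n n ℂ} (h : A.IsHermitian) :
    (matFun f A).trace = ∑ i, ((f (h.eigenvalues i) : ℝ) : ℂ) := by
  rw [matFun_of_isHermitian f h, trace_mul_comm, ← mul_assoc,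
    Unitary.coe_star_mul_self, one_mul, trace_diagonal]

private theorem matFun_conj_pow (u x : Matrix n n ℂ) (h1 : star u * u = 1) (h2 : u * star u = 1)
    (k : ℕ) : (u * x * star u) ^ k = u * x ^ k * star u := by
  induction k with
  | zero => simp [h2]
  | succ k ih =>
    rw [pow_succ, ih, pow_succ]
    simp only [mul_assoc]
    rw [← mul_assoc (star u) u, h1, one_mul]

theorem aeval_eq_matFun {A : Matrix n n ℂ} (h : A.IsHermitian) (p : ℝ[X]) :
    (aeval A p : Matrix n n ℂ) = matFun (fun x => p.eval x) A := by
  set u : Matrix n n ℂ := (Matrix.IsHermitian.eigenvectorUnitary h : Matrix n n ℂ) with hu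
  have h1 : star u * u = 1 := Unitary.coe_star_mul_self _
  have h2 : u * star u = 1 := Unitary.coe_mul_star_self _
  set D : Matrix n n ℂ := Matrix.diagonal (fun i => ((h.eigenvalues i : ℝ) : ℂ)) with hD
  have hspec : A = u * D * star u := by
    rw [hu, hD]
    conv_lhs => rw [h.spectral_theorem, Unitary.conjStarAlgAut_apply]
    rfl
  rw [matFun_of_isHermitian _ h]
  have key : ∀ q : ℝ[X], aeval (u * D * star u) q = u * aeval D q * star u := by
    intro q
    induction q using Polynomial.induction_on' with
    | add p q hp hq => rw [map_add, map_add, hp, hq, mul_add, add_mul]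
    | monomial k a =>
      rw [aeval_monomial, aeval_monomial, matFun_conj_pow u D h1 h2 k]
      have : (algebraMap ℝ (Matrix n n ℂ)) a = a • (1 : Matrix n n ℂ) := by
        rw [Algebra.algebraMap_eq_smul_one]
      rw [this]
      simp only [smul_mul_assoc, one_mul, mul_smul_comm]
  have hDq : aeval D p = Matrix.diagonal (fun i => ((p.eval (h.eigenvalues i) : ℝ) : ℂ)) := by
    have e1 : aeval D p
        = Matrix.diagonal (aeval (fun i => ((h.eigenvalues i : ℝ) : ℂ)) p : n → ℂ) := by
      rw [hD]
      exact (aeval_algHom_apply ((Matrix.diagonalAlgHom (n := n) ℂ).restrictScalars ℝ)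
        (fun i => ((h.eigenvalues i : ℝ) : ℂ)) p : _)
    have e3 : (aeval (fun i => ((h.eigenvalues i : ℝ) : ℂ)) p : n → ℂ)
        = fun i => ((p.eval (h.eigenvalues i) : ℝ) : ℂ) := by
      funext i
      have e4 : (aeval (fun i => ((h.eigenvalues i : ℝ) : ℂ)) p : n → ℂ) i
          = aeval ((h.eigenvalues i : ℝ) : ℂ) p :=
        (aeval_algHom_apply (Pi.evalAlgHom ℝ (fun _ : n => ℂ) i) _ p).symm
      rw [e4]
      have e2 : ((h.eigenvalues i : ℝ) : ℂ) = algebraMap ℝ ℂ (h.eigenvalues i) := rfl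
      rw [e2, aeval_algebraMap_apply_eq_algebraMap_eval]
      rfl
    rw [e1, e3]
  conv_lhs => rw [hspec]
  rw [key, hDq]

theorem hasDerivAt_path (A B : Matrix n n ℂ) (ε₀ : ℝ) :
    HasDerivAt (fun ε : ℝ => A + ε • B) B ε₀ := by
  exact ((hasDerivAt_const ε₀ A).add ((hasDerivAt_id ε₀).smul_const B)).congr_deriv (by simp)

theorem hasDerivAt_pow_path (A B : Matrix n n ℂ) (k : ℕ) (ε₀ : ℝ) :
    HasDerivAt (fun ε : ℝ => (A + ε • B) ^ k)
      (∑ j ∈ Finset.range k, (A + ε₀ • B) ^ j * B * (A + ε₀ • B) ^ (k - 1 - j)) ε₀ := by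
  induction k with
  | zero =>
    simp only [pow_zero, Finset.sum_range_zero]
    exact hasDerivAt_const ε₀ (1 : Matrix n n ℂ)
  | succ k ih =>
    have h := ih.mul (hasDerivAt_path A B ε₀)
    have hfun : (fun ε : ℝ => (A + ε • B) ^ k * (A + ε • B))
        = fun ε : ℝ => (A + ε • B) ^ (k + 1) := by
      funext ε; rw [← pow_succ]
    change HasDerivAt (fun ε : ℝ => (A + ε • B) ^ k * (A + ε • B)) _ ε₀ at h
    rw [hfun] at h
    have e : (∑ j ∈ Finset.range (k + 1),
          (A + ε₀ • B) ^ j * B * (A + ε₀ • B) ^ (k + 1 - 1 - j))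
        = (∑ j ∈ Finset.range k, (A + ε₀ • B) ^ j * B * (A + ε₀ • B) ^ (k - 1 - j))
            * (A + ε₀ • B) + (A + ε₀ • B) ^ k * B := by
      rw [Finset.sum_range_succ, Finset.sum_mul]
      congr 1
      · apply Finset.sum_congr rfl
        intro j hj
        have hj' : j < k := Finset.mem_range.1 hj
        have hexp : k + 1 - 1 - j = (k - 1 - j) + 1 := by omega
        rw [hexp, pow_succ, ← mul_assoc]
      · simp
    rw [e]
    exact h

theorem hasDerivAt_trace_pow (A B : Matrix n n ℂ) (k : ℕ) (ε₀ : ℝ) :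
    HasDerivAt (fun ε : ℝ => ((A + ε • B) ^ k).trace)
      ((k : ℂ) * ((A + ε₀ • B) ^ (k - 1) * B).trace) ε₀ := by
  classical
  set L : Matrix n n ℂ →L[ℝ] ℂ :=
    LinearMap.toContinuousLinearMap ((Matrix.traceLinearMap n ℂ ℂ).restrictScalars ℝ) with hL
  have hcoe : ∀ x : Matrix n n ℂ, L x = x.trace := fun x => by
    rw [hL, LinearMap.coe_toContinuousLinearMap']; rfl
  have h := L.hasFDerivAt.comp_hasDerivAt ε₀ (hasDerivAt_pow_path A B k ε₀)
  have e : L (∑ j ∈ Finset.range k, (A + ε₀ • B) ^ j * B * (A + ε₀ • B) ^ (k - 1 - j))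
      = (k : ℂ) * ((A + ε₀ • B) ^ (k - 1) * B).trace := by
    rw [map_sum]
    have : ∀ j ∈ Finset.range k,
        L ((A + ε₀ • B) ^ j * B * (A + ε₀ • B) ^ (k - 1 - j))
          = ((A + ε₀ • B) ^ (k - 1) * B).trace := by
      intro j hj
      have hj' : j < k := Finset.mem_range.1 hj
      have hexp : k - 1 - j + j = k - 1 := by omega
      rw [hcoe, Matrix.trace_mul_comm, ← mul_assoc, ← pow_add, hexp]
    rw [Finset.sum_congr rfl this, Finset.sum_const, Finset.card_range, nsmul_eq_mul]
  exact h.congr_deriv e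

theorem hasDerivAt_trace_aeval (A B : Matrix n n ℂ) (p : ℝ[X]) (ε₀ : ℝ) :
    HasDerivAt (fun ε : ℝ => (aeval (A + ε • B) p : Matrix n n ℂ).trace)
      (((aeval (A + ε₀ • B) (derivative p) : Matrix n n ℂ) * B).trace) ε₀ := by
  induction p using Polynomial.induction_on' with
  | add p q hp hq =>
    have h := hp.add hq
    have hfun : (fun ε : ℝ => (aeval (A + ε • B) p : Matrix n n ℂ).trace
          + (aeval (A + ε • B) q : Matrix n n ℂ).trace)
        = fun ε : ℝ => (aeval (A + ε • B) (p + q) : Matrix n n ℂ).trace := by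
      funext ε; rw [map_add, Matrix.trace_add]
    change HasDerivAt (fun ε : ℝ => (aeval (A + ε • B) p : Matrix n n ℂ).trace
      + (aeval (A + ε • B) q : Matrix n n ℂ).trace) _ ε₀ at h
    rw [hfun] at h
    have e : (aeval (A + ε₀ • B) (derivative p) : Matrix n n ℂ) * B
          + (aeval (A + ε₀ • B) (derivative q) : Matrix n n ℂ) * B
        = (aeval (A + ε₀ • B) (derivative (p + q)) : Matrix n n ℂ) * B := by
      rw [derivative_add, map_add, add_mul]
    rw [← Matrix.trace_add, e] at h
    exact h
  | monomial k a =>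
    have h := (hasDerivAt_trace_pow A B k ε₀).const_smul a
    have hfun : (fun ε : ℝ => a • ((A + ε • B) ^ k).trace)
        = fun ε : ℝ => (aeval (A + ε • B) (monomial k a) : Matrix n n ℂ).trace := by
      funext ε
      rw [aeval_monomial, Algebra.algebraMap_eq_smul_one, smul_mul_assoc, one_mul,
        Matrix.trace_smul]
    change HasDerivAt (fun ε : ℝ => a • ((A + ε • B) ^ k).trace) _ ε₀ at h
    rw [hfun] at h
    have e : a • ((k : ℂ) * ((A + ε₀ • B) ^ (k - 1) * B).trace)
        = ((aeval (A + ε₀ • B) (derivative (monomial k a)) : Matrix n n ℂ) * B).trace := by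
      have e2 : ((aeval (A + ε₀ • B) (derivative (monomial k a)) : Matrix n n ℂ) * B).trace
          = (a * (k : ℝ)) • ((A + ε₀ • B) ^ (k - 1) * B).trace := by
        rw [derivative_monomial, aeval_monomial, Algebra.algebraMap_eq_smul_one, smul_mul_assoc,
          one_mul, smul_mul_assoc, Matrix.trace_smul]
      rw [e2, Complex.real_smul, Complex.real_smul]
      push_cast
      ring
    rw [e] at h
    exact h

theorem eigenvalues_close [Nonempty n] {A : Matrix n n ℂ} (hA : A.IsHermitian)
    (B : Matrix n n ℂ) (ε : ℝ) (hM : (A + ε • B).IsHermitian) (i : n) :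
    ∃ j, |hM.eigenvalues i - hA.eigenvalues j|
      ≤ |ε| * ∑ a, ∑ b, ‖(star (hA.eigenvectorUnitary : Matrix n n ℂ) * B *
          (hA.eigenvectorUnitary : Matrix n n ℂ)) a b‖ := by
  classical
  set u : Matrix n n ℂ := (hA.eigenvectorUnitary : Matrix n n ℂ) with hu
  set Cm : Matrix n n ℂ := star u * B * u with hCm
  set c : ℝ := ∑ a, ∑ b, ‖Cm a b‖ with hc
  have h1 : star u * u = 1 := Unitary.coe_star_mul_self _
  have h2 : u * star u = 1 := Unitary.coe_mul_star_self _
  set D : Matrix n n ℂ := Matrix.diagonal (fun l => ((hA.eigenvalues l : ℝ) : ℂ)) with hD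
  have hspec : A = u * D * star u := by
    rw [hu, hD]
    conv_lhs => rw [hA.spectral_theorem, Unitary.conjStarAlgAut_apply]
    rfl
  set v : n → ℂ := (WithLp.equiv 2 (n → ℂ)) (hM.eigenvectorBasis i) with hv
  have hven : (A + ε • B) *ᵥ v = hM.eigenvalues i • v := hM.mulVec_eigenvectorBasis i
  have hv0 : v ≠ 0 := by
    intro hcon
    apply hM.eigenvectorBasis.orthonormal.ne_zero i
    apply (WithLp.equiv 2 (n → ℂ)).injective
    exact hcon
  set w : n → ℂ := star u *ᵥ v with hw
  have hw0 : w ≠ 0 := by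
    intro hcon
    apply hv0
    have : u *ᵥ w = v := by
      rw [hw, Matrix.mulVec_mulVec, h2, Matrix.one_mulVec]
    rw [← this, hcon, Matrix.mulVec_zero]
  have hkey : D *ᵥ w + ε • (Cm *ᵥ w) = hM.eigenvalues i • w := by
    have e1 : star u *ᵥ ((A + ε • B) *ᵥ v) = star u *ᵥ (hM.eigenvalues i • v) := by
      rw [hven]
    rw [Matrix.mulVec_smul] at e1
    rw [Matrix.mulVec_mulVec] at e1
    have e2 : star u * (A + ε • B) = D * star u + ε • (Cm * star u) := by
      rw [hspec, mul_add, Matrix.mul_smul, hCm]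
      congr 1
      · rw [← mul_assoc, ← mul_assoc, h1, one_mul]
      · rw [mul_assoc (star u * B) u (star u), h2, mul_one]
    rw [e2, Matrix.add_mulVec, Matrix.smul_mulVec, ← Matrix.mulVec_mulVec,
      ← Matrix.mulVec_mulVec] at e1
    exact e1
  obtain ⟨i₀, -, hmax⟩ := Finset.exists_max_image Finset.univ
    (fun l => ‖w l‖) Finset.univ_nonempty
  have hpos : 0 < ‖w i₀‖ := by
    obtain ⟨l, hl⟩ := Function.ne_iff.1 hw0
    calc (0 : ℝ) < ‖w l‖ := by
          simpa using hl
      _ ≤ ‖w i₀‖ := hmax l (Finset.mem_univ l)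
  have hcomp : ((hA.eigenvalues i₀ : ℝ) : ℂ) * w i₀ + (ε : ℂ) * (Cm *ᵥ w) i₀
      = ((hM.eigenvalues i : ℝ) : ℂ) * w i₀ := by
    have := congrFun hkey i₀
    simpa [hD, Matrix.mulVec_diagonal, Complex.real_smul] using this
  have hsub : (((hM.eigenvalues i : ℝ) : ℂ) - ((hA.eigenvalues i₀ : ℝ) : ℂ)) * w i₀
      = (ε : ℂ) * (Cm *ᵥ w) i₀ := by
    linear_combination -hcomp
  have habs : |hM.eigenvalues i - hA.eigenvalues i₀| * ‖w i₀‖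
      = |ε| * ‖(Cm *ᵥ w) i₀‖ := by
    have := congrArg (‖·‖) hsub
    rwa [norm_mul, norm_mul, ← Complex.ofReal_sub, Complex.norm_real,
      Complex.norm_real, Real.norm_eq_abs, Real.norm_eq_abs] at this
  have hbound : ‖(Cm *ᵥ w) i₀‖ ≤ c * ‖w i₀‖ := by
    have e1 : ‖(Cm *ᵥ w) i₀‖ ≤ ∑ b, ‖Cm i₀ b‖ * ‖w b‖ := by
      have emv : (Cm *ᵥ w) i₀ = ∑ b, Cm i₀ b * w b := by
        simp [Matrix.mulVec, dotProduct]
      rw [emv]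
      calc ‖∑ b, Cm i₀ b * w b‖ ≤ ∑ b, ‖Cm i₀ b * w b‖ := by
            simpa using
              norm_sum_le Finset.univ (fun b => Cm i₀ b * w b)
        _ = ∑ b, ‖Cm i₀ b‖ * ‖w b‖ := by
            simp [norm_mul]
    refine le_trans e1 ?_
    have e2 : ∑ b, ‖Cm i₀ b‖ * ‖w b‖
        ≤ ∑ b, ‖Cm i₀ b‖ * ‖w i₀‖ := by
      apply Finset.sum_le_sum
      intro b _
      exact mul_le_mul_of_nonneg_left (hmax b (Finset.mem_univ b)) (norm_nonneg _)
    refine le_trans e2 ?_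
    rw [← Finset.sum_mul]
    apply mul_le_mul_of_nonneg_right _ (le_of_lt hpos)
    rw [hc]
    exact Finset.single_le_sum (f := fun a => ∑ b, ‖Cm a b‖)
      (fun a _ => Finset.sum_nonneg fun b _ => norm_nonneg _) (Finset.mem_univ i₀)
  refine ⟨i₀, ?_⟩
  have : |hM.eigenvalues i - hA.eigenvalues i₀| * ‖w i₀‖
      ≤ (|ε| * c) * ‖w i₀‖ := by
    rw [habs, mul_assoc]
    exact mul_le_mul_of_nonneg_left hbound (abs_nonneg ε)
  exact le_of_mul_le_mul_right this hpos

theorem isHermitian_path {A B : Matrix n n ℂ} (hA : A.IsHermitian) (hB : B.IsHermitian)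
    (ε : ℝ) : (A + ε • B).IsHermitian := by
  apply hA.add
  show (ε • B)ᴴ = ε • B
  rw [Matrix.conjTranspose_smul, star_trivial, hB]

end Helpers

theorem trace_matFun_deriv {n : Type*} [Fintype n] [DecidableEq n]
    (A B : Matrix n n ℂ) (hA : A.IsHermitian) (hB : B.IsHermitian)
    (U : Set ℝ) (hU : IsOpen U) (f : ℝ → ℝ) (hf : AnalyticOnNhd ℝ f U)
    (hspec : ∀ i, hA.eigenvalues i ∈ U) :
    HasDerivAt (fun ε : ℝ => (matFun f (A + ε • B)).trace)
      ((matFun (deriv f) A * B).trace) 0 := by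
  classical
  cases isEmpty_or_nonempty n with
  | inl hempty =>
    have h0 : ∀ M : Matrix n n ℂ, M.trace = 0 := fun M => by simp [Matrix.trace]
    have hfun : (fun ε : ℝ => (matFun f (A + ε • B)).trace) = fun _ => (0 : ℂ) :=
      funext fun ε => h0 _
    rw [hfun, h0]
    exact hasDerivAt_const 0 0
  | inr hne =>
    obtain ⟨p, hp⟩ := hermite_interp (Finset.image hA.eigenvalues Finset.univ) f (deriv f)
    have hpv : ∀ i, p.eval (hA.eigenvalues i) = f (hA.eigenvalues i) := fun i =>
      (hp _ (Finset.mem_image_of_mem _ (Finset.mem_univ i))).1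
    have hpd : ∀ i, (derivative p).eval (hA.eigenvalues i) = deriv f (hA.eigenvalues i) :=
      fun i => (hp _ (Finset.mem_image_of_mem _ (Finset.mem_univ i))).2
    set h : ℝ → ℝ := fun x => f x - p.eval x with hh
    have hherm : ∀ ε : ℝ, (A + ε • B).IsHermitian := fun ε => isHermitian_path hA hB ε
    have hA0 : A + (0 : ℝ) • B = A := by rw [zero_smul, add_zero]
    have hdec : (fun ε : ℝ => (matFun f (A + ε • B)).trace)
        = fun ε : ℝ => (aeval (A + ε • B) p : Matrix n n ℂ).trace
            + (matFun h (A + ε • B)).trace := by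
      funext ε
      rw [aeval_eq_matFun (hherm ε), ← Matrix.trace_add, ← matFun_add _ _ (hherm ε)]
      have e : (fun x => eval x p + h x) = f := by funext x; rw [hh]; ring
      rw [e]
    rw [hdec]
    have h1 := hasDerivAt_trace_aeval A B p 0
    rw [hA0] at h1
    have hval : ((aeval A (derivative p) : Matrix n n ℂ) * B).trace
        = (matFun (deriv f) A * B).trace := by
      rw [aeval_eq_matFun hA, matFun_congr hA hpd]
    rw [hval] at h1
    -- the remainder term has derivative zero
    have r0 : (matFun h A).trace = 0 := by
      rw [trace_matFun h hA]
      apply Finset.sum_eq_zero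
      intro i _
      rw [hh]
      simp [hpv i]
    have h2 : HasDerivAt (fun ε : ℝ => (matFun h (A + ε • B)).trace) 0 0 := by
      rw [hasDerivAt_iff_isLittleO]
      have hsimp : (fun ε : ℝ => (matFun h (A + ε • B)).trace
            - (matFun h (A + (0:ℝ) • B)).trace - (ε - 0) • (0 : ℂ))
          = fun ε : ℝ => (matFun h (A + ε • B)).trace := by
        funext ε
        rw [smul_zero, sub_zero, hA0, r0, sub_zero]
      rw [hsimp]
      have hsimp2 : (fun ε : ℝ => ε - 0) = fun ε : ℝ => ε := by
        funext ε; rw [sub_zero]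
      rw [hsimp2]
      rw [Asymptotics.isLittleO_iff]
      intro δ hδ
      set c : ℝ := ∑ a, ∑ b, ‖(star (hA.eigenvectorUnitary : Matrix n n ℂ) * B *
          (hA.eigenvectorUnitary : Matrix n n ℂ)) a b‖ with hc
      have hc0 : 0 ≤ c := Finset.sum_nonneg fun a _ =>
        Finset.sum_nonneg fun b _ => norm_nonneg _
      set N : ℝ := (Fintype.card n : ℝ) with hN
      have hN0 : 0 < N := by
        rw [hN]
        exact_mod_cast Fintype.card_pos
      set δ' : ℝ := δ / (N * (c + 1)) with hδ'def
      have hδ' : 0 < δ' := by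
        rw [hδ'def]
        positivity
      have key : ∀ j : n, ∃ ρ : ℝ, 0 < ρ ∧
          ∀ x : ℝ, |x - hA.eigenvalues j| < ρ → |h x| ≤ δ' * |x - hA.eigenvalues j| := by
        intro j
        have hdf : HasDerivAt f (deriv f (hA.eigenvalues j)) (hA.eigenvalues j) :=
          (hf _ (hspec j)).differentiableAt.hasDerivAt
        have hdh : HasDerivAt h 0 (hA.eigenvalues j) := by
          have := hdf.sub (p.hasDerivAt (hA.eigenvalues j))
          rwa [hpd j, sub_self] at this
        have hlo := hasDerivAt_iff_isLittleO.1 hdh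
        have hmu : h (hA.eigenvalues j) = 0 := by rw [hh]; simp [hpv j]
        rw [Asymptotics.isLittleO_iff] at hlo
        have hev := hlo hδ'
        rw [Metric.eventually_nhds_iff] at hev
        obtain ⟨ρ, hρ0, hρ⟩ := hev
        refine ⟨ρ, hρ0, fun x hx => ?_⟩
        have hdist : dist x (hA.eigenvalues j) < ρ := by rwa [Real.dist_eq]
        have := hρ hdist
        simpa [hmu, Real.norm_eq_abs] using this
      choose ρ hρ using key
      set ρ₀ : ℝ := Finset.univ.inf' Finset.univ_nonempty ρ with hρ₀def
      have hρ₀ : 0 < ρ₀ := by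
        rw [hρ₀def, Finset.lt_inf'_iff]
        exact fun j _ => (hρ j).1
      filter_upwards [Metric.ball_mem_nhds (0 : ℝ)
        (by positivity : (0:ℝ) < ρ₀ / (c + 1))] with ε hε
      rw [Metric.mem_ball, Real.dist_eq, sub_zero] at hε
      have hi : ∀ i, |h ((hherm ε).eigenvalues i)| ≤ δ' * ((c + 1) * |ε|) := by
        intro i
        obtain ⟨j, hj⟩ := eigenvalues_close hA B ε (hherm ε) i
        have hcc : |ε| * c ≤ (c + 1) * |ε| := by nlinarith [abs_nonneg ε]
        have hlt : |(hherm ε).eigenvalues i - hA.eigenvalues j| < ρ j := by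
          have s1 : |ε| * (c + 1) < ρ₀ := by
            have := mul_lt_mul_of_pos_right hε (by linarith : (0:ℝ) < c + 1)
            rwa [div_mul_cancel₀ _ (by linarith : c + 1 ≠ 0)] at this
          have s2 : ρ₀ ≤ ρ j := Finset.inf'_le _ (Finset.mem_univ j)
          calc |(hherm ε).eigenvalues i - hA.eigenvalues j| ≤ |ε| * c := hj
            _ ≤ |ε| * (c + 1) := by nlinarith [abs_nonneg ε]
            _ < ρ₀ := s1
            _ ≤ ρ j := s2
        calc |h ((hherm ε).eigenvalues i)|
            ≤ δ' * |(hherm ε).eigenvalues i - hA.eigenvalues j| := (hρ j).2 _ hlt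
          _ ≤ δ' * ((c + 1) * |ε|) := by
              apply mul_le_mul_of_nonneg_left _ (le_of_lt hδ')
              exact le_trans hj hcc
      calc ‖(matFun h (A + ε • B)).trace‖
          = ‖∑ i, ((h ((hherm ε).eigenvalues i) : ℝ) : ℂ)‖ := by
            rw [trace_matFun h (hherm ε)]
        _ ≤ ∑ i, ‖((h ((hherm ε).eigenvalues i) : ℝ) : ℂ)‖ := norm_sum_le _ _
        _ = ∑ i, |h ((hherm ε).eigenvalues i)| := by
            simp [Complex.norm_real]
        _ ≤ ∑ _i : n, δ' * ((c + 1) * |ε|) := Finset.sum_le_sum fun i _ => hi i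
        _ = N * (δ' * ((c + 1) * |ε|)) := by
            rw [Finset.sum_const, Finset.card_univ, nsmul_eq_mul, hN]
        _ = δ * ‖ε‖ := by
            rw [Real.norm_eq_abs, hδ'def]
            field_simp
    have := h1.add h2
    simp only [add_zero] at this
    exact this
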